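/- Let p(X) ∈ F[X] be any polynomial. Then Σ_{x ∈ H} p(x) = 0 if and only if there exist polynomials g(X), h(X) ∈ F[X] with deg g(X) < n − 1 such that p(X) = X·g(X) + h(X)·(X^n − 1). -/

import Mathlib

open Polynomial

lemma sum_eval_roots_of_unity {F : Type*} [Field F] (n : ℕ) (hn0 : 0 < n) (g : F)
    (hg : IsPrimitiveRoot g n) (p : F[X]) (hp : p.degree < (n : ℕ)) :
    (∑ i ∈ Finset.range n, p.eval (g ^ i)) = n * p.coeff 0 := by
  have hnd : p.natDegree < n := by
    rcases eq_or_ne p 0 with rfl | h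
    · simpa using hn0
    · exact (natDegree_lt_iff_degree_lt h).2 hp
  have heval : ∀ x : F, p.eval x = ∑ k ∈ Finset.range n, p.coeff k * x ^ k := fun x =>
    eval_eq_sum_range' hnd x
  calc (∑ i ∈ Finset.range n, p.eval (g ^ i))
      = ∑ i ∈ Finset.range n, ∑ k ∈ Finset.range n, p.coeff k * (g ^ k) ^ i := by
        refine Finset.sum_congr rfl fun i _ => ?_
        rw [heval]
        refine Finset.sum_congr rfl fun k _ => ?_
        rw [← pow_mul, ← pow_mul, Nat.mul_comm]
    _ = ∑ k ∈ Finset.range n, p.coeff k * ∑ i ∈ Finset.range n, (g ^ k) ^ i := by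
        rw [Finset.sum_comm]; simp [Finset.mul_sum]
    _ = n * p.coeff 0 := by
        rw [Finset.sum_eq_single 0]
        · simp [mul_comm]
        · intro k hk hk0
          have h1 : g ^ k ≠ 1 := hg.pow_ne_one_of_pos_of_lt hk0
            (Finset.mem_range.mp hk)
          have h2 : (g ^ k) ^ n = 1 := by rw [← pow_mul, Nat.mul_comm, pow_mul, hg.pow_eq_one, one_pow]
          have := geom_sum_eq h1 n
          rw [this, h2]
          simp
        · intro h; simp at h; omega

/-- **Aurora/Marlin sumcheck characterization.**
For any polynomial `p`, `∑_{x ∈ H} p(x) = 0` iff there exist polynomials `q, h` with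
`deg q < n - 1` and `p(X) = X·q(X) + h(X)·(X^n - 1)`. Here `H = {g^0, …, g^(n-1)}` for a
primitive `n`-th root of unity `g` in a field `F` in which `n` is nonzero. -/
theorem sumcheck_reduced_form {F : Type*} [Field F] (n : ℕ) (hn0 : 0 < n)
    (hn : (n : F) ≠ 0) (g : F) (hg : IsPrimitiveRoot g n) (p : F[X]) :
    (∑ i ∈ Finset.range n, p.eval (g ^ i)) = 0 ↔
      ∃ q h : F[X], q.degree < (n - 1 : ℕ) ∧ p = X * q + h * (X ^ n - 1) := by
  have hroot : ∀ i : ℕ, ((X : F[X]) ^ n - 1).eval (g ^ i) = 0 := by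
    intro i
    simp only [eval_sub, eval_pow, eval_X, eval_one]
    rw [← pow_mul, Nat.mul_comm, pow_mul, hg.pow_eq_one, one_pow, sub_self]
  constructor
  · intro hsum
    have hmonic : ((X : F[X]) ^ n - 1).Monic := by
      have := monic_X_pow_sub_C (1 : F) hn0.ne'
      simpa using this
    set r := p %ₘ (X ^ n - 1) with hr_def
    set h0 := p /ₘ (X ^ n - 1) with hh0_def
    have hp : p = (X ^ n - 1) * h0 + r := by
      rw [hr_def, hh0_def, add_comm, modByMonic_add_div p (X ^ n - 1)]
    have hrdeg : r.degree < (n : ℕ) := by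
      have := degree_modByMonic_lt p hmonic
      rwa [show ((X : F[X]) ^ n - 1) = X ^ n - C 1 by simp, degree_X_pow_sub_C hn0] at this
    have hsum_r : (∑ i ∈ Finset.range n, r.eval (g ^ i)) = 0 := by
      rw [← hsum]
      refine (Finset.sum_congr rfl fun i _ => ?_).symm
      conv_lhs => rw [hp]
      simp [hroot i]
    have hc0 : r.coeff 0 = 0 := by
      rw [sum_eval_roots_of_unity n hn0 g hg r hrdeg] at hsum_r
      exact (mul_eq_zero.mp hsum_r).resolve_left hn
    refine ⟨r.divX, h0, ?_, ?_⟩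
    · rw [degree_lt_iff_coeff_zero]
      intro m hm
      rw [coeff_divX]
      apply coeff_eq_zero_of_degree_lt
      refine lt_of_lt_of_le hrdeg ?_
      have hnm : n ≤ m + 1 := by omega
      exact_mod_cast hnm
    · have : X * r.divX = r := by
        have := X_mul_divX_add r
        rwa [hc0, map_zero, add_zero] at this
      rw [this, hp, add_comm, mul_comm]
  · rintro ⟨q, h, hq, rfl⟩
    have hd : (X * q : F[X]).degree < (n : ℕ) := by
      rcases eq_or_ne q 0 with rfl | hq0
      · simp only [mul_zero, degree_zero]; exact WithBot.bot_lt_coe n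
      · rw [degree_mul, degree_X]
        calc 1 + q.degree < 1 + ((n - 1 : ℕ) : WithBot ℕ) := by
              exact WithBot.add_lt_add_left (by simp) hq
          _ = ((n : ℕ) : WithBot ℕ) := by
              rw [← Nat.cast_one, ← Nat.cast_add]
              norm_cast
              omega
    have : (∑ i ∈ Finset.range n, (X * q + h * (X ^ n - 1)).eval (g ^ i))
        = ∑ i ∈ Finset.range n, (X * q : F[X]).eval (g ^ i) := by
      refine Finset.sum_congr rfl fun i _ => ?_
      simp [hroot i]
    rw [this, sum_eval_roots_of_unity n hn0 g hg _ hd]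
    simp
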